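/- Consider a random walk on states {0, 1, ..., n} that at each step from state i > 0 moves to i-1 with probability at least p_i = min(i/(2d), 1/2) and otherwise to i+1 (state n moves to n-1 with probability 1, state 0 is absorbing). Starting from any state i0 ≤ n, the expected number of steps until absorption at 0 is at most 4^d · n^2. -/

import Mathlib

noncomputable def Fq (d i : ℕ) : ℝ :=
  ((2*d - i).factorial : ℝ) * ((i-1).factorial : ℝ) /
    ((d.factorial : ℝ) * ((d-1).factorial : ℝ))

lemma Fq_nonneg (d i : ℕ) : 0 ≤ Fq d i := by
  unfold Fq; positivity

lemma Fq_d (d : ℕ) : Fq d d = 1 := by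
  unfold Fq
  have h1 : (0:ℝ) < (d.factorial : ℝ) * ((d-1).factorial : ℝ) := by
    have a := Nat.factorial_pos d
    have b := Nat.factorial_pos (d-1)
    exact mul_pos (by exact_mod_cast a) (by exact_mod_cast b)
  rw [show 2*d - d = d by omega, div_self h1.ne']

lemma Fq_rec (d i : ℕ) (h1 : 1 ≤ i) (h2 : i < d) :
    (i:ℝ) * Fq d i = (2*(d:ℝ) - (i:ℝ)) * Fq d (i+1) := by
  obtain ⟨j, rfl⟩ : ∃ j, i = j+1 := ⟨i-1, by omega⟩
  unfold Fq
  rw [show 2*d - (j+1) = (2*d - (j+2)) + 1 by omega]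
  rw [show (j+1) - 1 = j by omega, show (j+1+1) - 1 = j+1 by omega]
  rw [Nat.factorial_succ (2*d - (j+2)), Nat.factorial_succ j]
  have hden : (0:ℝ) < (d.factorial : ℝ) * ((d-1).factorial : ℝ) := by
    have a := Nat.factorial_pos d
    have b := Nat.factorial_pos (d-1)
    exact mul_pos (by exact_mod_cast a) (by exact_mod_cast b)
  have hcast : ((2*d - (j+2) : ℕ) : ℝ) = 2*(d:ℝ) - (j:ℝ) - 2 := by
    have hle : (j+2 : ℕ) ≤ 2*d := by omega
    rw [Nat.cast_sub hle]; push_cast; ring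
  push_cast [hcast]
  field_simp
  ring

lemma Fq_one_le_aux (d : ℕ) : ∀ m i, 1 ≤ i → i ≤ d → d - i ≤ m → 1 ≤ Fq d i := by
  intro m
  induction m with
  | zero =>
    intro i h1 h2 h3
    have : i = d := by omega
    subst this
    rw [Fq_d]
  | succ m ih =>
    intro i h1 h2 h3
    rcases eq_or_lt_of_le h2 with rfl | hlt
    · rw [Fq_d]
    · have hF2 := ih (i+1) (by omega) (by omega) (by omega)
      have hrec := Fq_rec d i h1 hlt
      have hi : (0:ℝ) < i := by exact_mod_cast h1
      have hdi : (i:ℝ) ≤ 2*(d:ℝ) - i := by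
        have : (i:ℝ) ≤ (d:ℝ) := by exact_mod_cast hlt.le
        linarith
      have key : (i:ℝ) * 1 ≤ (i:ℝ) * Fq d i := by
        rw [hrec, mul_one]
        calc (i:ℝ) ≤ 2*(d:ℝ) - i := hdi
          _ = (2*(d:ℝ) - i) * 1 := by ring
          _ ≤ (2*(d:ℝ) - i) * Fq d (i+1) := by
              apply mul_le_mul_of_nonneg_left hF2; linarith
      exact le_of_mul_le_mul_left key hi

lemma Fq_one_le (d i : ℕ) (h1 : 1 ≤ i) (h2 : i ≤ d) : 1 ≤ Fq d i :=
  Fq_one_le_aux d (d - i) i h1 h2 le_rfl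

lemma Fq_mono (d j : ℕ) (hj : 1 ≤ j) (hjd : j < d) : Fq d (j+1) ≤ Fq d j := by
  have hrec := Fq_rec d j hj hjd
  have hj0 : (0:ℝ) < j := by exact_mod_cast hj
  have h2dj : (j:ℝ) ≤ 2*(d:ℝ) - j := by
    have : (j:ℝ) ≤ (d:ℝ) := by exact_mod_cast hjd.le
    linarith
  have hFn := Fq_nonneg d (j+1)
  have key : (j:ℝ) * Fq d (j+1) ≤ (j:ℝ) * Fq d j := by
    rw [hrec]
    exact mul_le_mul_of_nonneg_right h2dj hFn
  exact le_of_mul_le_mul_left key hj0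

lemma Fq_le_one' (d : ℕ) : ∀ i, 1 ≤ i → i ≤ d → Fq d i ≤ Fq d 1 := by
  intro i hi
  induction i, hi using Nat.le_induction with
  | base => intro _; exact le_rfl
  | succ i hi ih =>
    intro h2
    exact (Fq_mono d i hi (by omega)).trans (ih (by omega))

lemma Fq_one_eq (d : ℕ) (hd : 1 ≤ d) : Fq d 1 = ((2*d-1).choose (d-1) : ℝ) := by
  have hc := Nat.choose_mul_factorial_mul_factorial (show d-1 ≤ 2*d-1 by omega)
  rw [show 2*d-1 - (d-1) = d by omega] at hc
  have hcR : ((2*d-1).factorial : ℝ)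
      = ((2*d-1).choose (d-1) : ℝ) * ((d-1).factorial : ℝ) * (d.factorial : ℝ) := by
    exact_mod_cast hc.symm
  unfold Fq
  rw [show (1:ℕ)-1 = 0 by rfl, Nat.factorial_zero, hcR]
  have a : ((d.factorial : ℝ)) ≠ 0 := by
    have := Nat.factorial_pos d; positivity
  have b : (((d-1).factorial : ℝ)) ≠ 0 := by
    have := Nat.factorial_pos (d-1); positivity
  field_simp
  ring

lemma Fq_le (d i : ℕ) (hd : 1 ≤ d) (h1 : 1 ≤ i) (h2 : i ≤ d) :
    Fq d i ≤ 2^(2*d-1) := by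
  have hch : (2*d-1).choose (d-1) ≤ 2^(2*d-1) := by
    have hs := Finset.single_le_sum (f := fun i => (2*d-1).choose i)
      (fun _ _ => Nat.zero_le _) (Finset.mem_range.2 (show d-1 < 2*d-1+1 by omega))
    rw [Nat.sum_range_choose] at hs
    exact hs
  calc Fq d i ≤ Fq d 1 := Fq_le_one' d i h1 h2
    _ = ((2*d-1).choose (d-1) : ℝ) := Fq_one_eq d hd
    _ ≤ 2^(2*d-1) := by exact_mod_cast hch

noncomputable def bndR (d n i : ℕ) : ℝ :=
  if i < d then (2*(n:ℝ) - 2*(i:ℝ) + 1) * Fq d i else 2*((n:ℝ) - (i:ℝ)) + 1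

noncomputable def GR (d n i : ℕ) : ℝ :=
  if i < d then (i:ℝ) * (2*(n:ℝ)*2^(2*d-1))
  else ((d:ℝ)-1) * (2*(n:ℝ)*2^(2*d-1)) + ((i:ℝ)-(d:ℝ)+1)*(2*(n:ℝ)+1-(i:ℝ)-(d:ℝ))

set_option maxHeartbeats 1000000 in
theorem stmt_13 (d n : ℕ) (hd : 1 ≤ d) (hdn : d ≤ n)
    (h q : ℕ → ℝ)
    (hq : ∀ i, 1 ≤ i → i < n → min ((i : ℝ) / (2 * d)) (1 / 2) ≤ q i ∧ q i ≤ 1)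
    (hnonneg : ∀ i, i ≤ n → 0 ≤ h i)
    (h0 : h 0 = 0)
    (hn : h n = 1 + h (n - 1))
    (hstep : ∀ i, 1 ≤ i → i < n →
      h i = 1 + q i * h (i - 1) + (1 - q i) * h (i + 1)) :
    ∀ i0, i0 ≤ n → h i0 ≤ 4 ^ d * (n : ℝ) ^ 2 := by
  have hdR : (1:ℝ) ≤ (d:ℝ) := by exact_mod_cast hd
  have hdnR : (d:ℝ) ≤ (n:ℝ) := by exact_mod_cast hdn
  have hn1 : (1:ℝ) ≤ (n:ℝ) := by linarith
  have h2d : (0:ℝ) < 2*(d:ℝ) := by linarith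
  -- the value at n
  have at_n : h (n-1) ≤ h n ∧ h n - h (n-1) ≤ bndR d n n := by
    have hb : bndR d n n = 2*((n:ℝ) - (n:ℝ)) + 1 := by
      simp only [bndR]; rw [if_neg (by omega : ¬ n < d)]
    constructor
    · linarith [hn]
    · rw [hb]; linarith [hn]
  -- main downward induction on differences
  have main : ∀ m i, 1 ≤ i → i ≤ n → n - i ≤ m →
      h (i-1) ≤ h i ∧ h i - h (i-1) ≤ bndR d n i := by
    intro m
    induction m with
    | zero =>
      intro i h1 h2 h3
      have : i = n := by omega
      subst this
      exact at_n
    | succ m ih =>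
      intro i h1 h2 h3
      rcases eq_or_lt_of_le h2 with rfl | hlt
      · exact at_n
      · obtain ⟨ihm, ihb⟩ := ih (i+1) (by omega) (by omega) (by omega)
        simp only [Nat.add_sub_cancel] at ihm
        have hB : 0 ≤ h (i+1) - h i := by linarith
        have hq1 := (hq i h1 hlt).1
        have hq2 := (hq i h1 hlt).2
        have hiR0 : (0:ℝ) < (i:ℝ) := by exact_mod_cast h1
        have hqpos : 0 < q i :=
          lt_of_lt_of_le (lt_min (div_pos hiR0 h2d) (by norm_num)) hq1
        have hrec : q i * (h i - h (i-1)) = 1 + (1 - q i) * (h (i+1) - h i) := by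
          linear_combination hstep i h1 hlt
        have hX : 0 ≤ h i - h (i-1) := by
          nlinarith [mul_nonneg (sub_nonneg.2 hq2) hB]
        refine ⟨by linarith, ?_⟩
        by_cases hcase : d ≤ i
        · -- q i ≥ 1/2
          have hdi : (d:ℝ) ≤ (i:ℝ) := by exact_mod_cast hcase
          have hmin : min ((i:ℝ)/(2*(d:ℝ))) (1/2 : ℝ) = 1/2 := by
            apply min_eq_right
            rw [le_div_iff₀ h2d]; linarith
          have hqh : (1:ℝ)/2 ≤ q i := by rw [hmin] at hq1; exact hq1
          have hXB : h i - h (i-1) ≤ 2 + (h (i+1) - h i) := by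
            nlinarith [mul_nonneg (show (0:ℝ) ≤ q i - 1/2 by linarith) hX,
              mul_nonneg (show (0:ℝ) ≤ q i - 1/2 by linarith) hB]
          have hb2 : bndR d n (i+1) = 2*((n:ℝ) - ((i+1:ℕ):ℝ)) + 1 := by
            simp only [bndR]; rw [if_neg (by omega : ¬ i+1 < d)]
          rw [hb2] at ihb
          show h i - h (i-1) ≤ bndR d n i
          simp only [bndR]; rw [if_neg (by omega : ¬ i < d)]
          push_cast at ihb ⊢
          linarith
        · push_neg at hcase
          have hile : (i:ℝ) ≤ (d:ℝ) := by exact_mod_cast hcase.le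
          have hmin : min ((i:ℝ)/(2*(d:ℝ))) (1/2 : ℝ) = (i:ℝ)/(2*(d:ℝ)) := by
            apply min_eq_left
            rw [div_le_iff₀ h2d]; linarith
          have hqi : (i:ℝ)/(2*(d:ℝ)) ≤ q i := by rw [hmin] at hq1; exact hq1
          have hid : (i:ℝ) ≤ q i * (2*(d:ℝ)) := (div_le_iff₀ h2d).mp hqi
          have e1 : (i:ℝ)*(h i - h (i-1)) ≤ (q i * (2*(d:ℝ)))*(h i - h (i-1)) :=
            mul_le_mul_of_nonneg_right hid hX
          have e2 : (2*(d:ℝ)) * (q i * (h i - h (i-1)))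
              = 2*(d:ℝ) * (1 + (1 - q i) * (h (i+1) - h i)) := by rw [hrec]
          have e3 : (i:ℝ)*(h (i+1) - h i) ≤ (q i * (2*(d:ℝ)))*(h (i+1) - h i) :=
            mul_le_mul_of_nonneg_right hid hB
          have eKey : (i:ℝ)*(h i - h (i-1)) ≤ 2*(d:ℝ) + (2*(d:ℝ) - i)*(h (i+1) - h i) := by
            nlinarith [e1, e2, e3]
          -- bound for B
          have hbnd1 : bndR d n (i+1) = (2*(n:ℝ) - 2*((i:ℝ)+1) + 1) * Fq d (i+1) := by
            rcases lt_or_eq_of_le (show i+1 ≤ d by omega) with hlt' | heq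
            · simp only [bndR]; rw [if_pos hlt']; push_cast; ring
            · subst heq
              simp only [bndR]; rw [if_neg (lt_irrefl _), Fq_d]
              push_cast; ring
          have hB2 : h (i+1) - h i ≤ (2*(n:ℝ) - 2*(i:ℝ) - 1) * Fq d (i+1) := by
            rw [hbnd1] at ihb
            have : (2*(n:ℝ) - 2*((i:ℝ)+1) + 1) = (2*(n:ℝ) - 2*(i:ℝ) - 1) := by ring
            rw [this] at ihb; exact ihb
          have hF2 : 1 ≤ Fq d (i+1) := Fq_one_le d (i+1) (by omega) (by omega)
          have hFrec := Fq_rec d i h1 hcase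
          have h2di : (0:ℝ) ≤ 2*(d:ℝ) - i := by linarith
          have t1 : (2*(d:ℝ) - i)*(h (i+1) - h i)
              ≤ (2*(d:ℝ) - i)*((2*(n:ℝ) - 2*(i:ℝ) - 1) * Fq d (i+1)) :=
            mul_le_mul_of_nonneg_left hB2 h2di
          have t2 : (2*(d:ℝ) - i)*1 ≤ (2*(d:ℝ) - i)*Fq d (i+1) :=
            mul_le_mul_of_nonneg_left hF2 h2di
          have hFrec' : (2*(n:ℝ) - 2*(i:ℝ) - 1) * ((i:ℝ) * Fq d i)
              = (2*(n:ℝ) - 2*(i:ℝ) - 1) * ((2*(d:ℝ) - (i:ℝ)) * Fq d (i+1)) := by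
            rw [hFrec]
          have key : (i:ℝ) * (h i - h (i-1)) ≤ (i:ℝ) * ((2*(n:ℝ) - 2*(i:ℝ) + 1) * Fq d i) := by
            linarith [eKey, t1, t2, hFrec, hFrec', hile]
          have final : h i - h (i-1) ≤ (2*(n:ℝ) - 2*(i:ℝ) + 1) * Fq d i :=
            le_of_mul_le_mul_left key hiR0
          show h i - h (i-1) ≤ bndR d n i
          simp only [bndR]; rw [if_pos hcase]
          exact final
  -- upward induction: h i ≤ GR d n i
  have hG : ∀ i, i ≤ n → h i ≤ GR d n i := by
    intro i
    induction i with
    | zero =>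
      intro _
      simp only [GR]
      rw [if_pos (by omega : 0 < d), h0]
      norm_num
    | succ i ihg =>
      intro hi
      obtain ⟨_, hb⟩ := main n (i+1) (by omega) hi (by omega)
      simp only [Nat.add_sub_cancel] at hb
      have hGi := ihg (by omega)
      have hGstep : GR d n i + bndR d n (i+1) ≤ GR d n (i+1) := by
        by_cases c1 : i+1 < d
        · simp only [GR, bndR]
          rw [if_pos (by omega : i < d), if_pos c1, if_pos c1]
          have hF := Fq_le d (i+1) hd (by omega) (by omega)
          have hFn := Fq_nonneg d (i+1)
          have hco : (2*(n:ℝ) - 2*((i+1:ℕ):ℝ) + 1) ≤ 2*(n:ℝ) := by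
            push_cast
            have : (0:ℝ) ≤ (i:ℝ) := by positivity
            linarith
          have hbb : (2*(n:ℝ) - 2*((i+1:ℕ):ℝ) + 1) * Fq d (i+1)
              ≤ (2*(n:ℝ)) * 2^(2*d-1) := mul_le_mul hco hF hFn (by positivity)
          push_cast at hbb ⊢
          linarith
        · by_cases c2 : i+1 = d
          · subst c2
            simp only [GR, bndR]
            rw [if_pos (show i < i+1 by omega), if_neg (lt_irrefl (i+1)),
              if_neg (lt_irrefl (i+1))]
            push_cast
            apply le_of_eq
            ring
          · have hdi : d ≤ i := by omega
            simp only [GR, bndR]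
            rw [if_neg (by omega : ¬ i < d), if_neg (by omega : ¬ i+1 < d),
              if_neg (by omega : ¬ i+1 < d)]
            push_cast
            apply le_of_eq
            ring
      calc h (i+1) ≤ h i + bndR d n (i+1) := by linarith
        _ ≤ GR d n i + bndR d n (i+1) := by linarith
        _ ≤ GR d n (i+1) := hGstep
  -- GR is bounded by 4^d n^2
  have h4 : (4:ℝ)^d = 2 * 2^(2*d-1) := by
    have e : (2:ℝ)^(2*d) = 2^(2*d-1) * 2 := by
      rw [← pow_succ]
      congr 1
      omega
    rw [show (4:ℝ) = 2^2 by norm_num, ← pow_mul, e]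
    ring
  have hd4 : (d:ℝ) ≤ (4:ℝ)^d := by
    have hlt : d < 4^d := Nat.lt_pow_self (by norm_num)
    calc (d:ℝ) ≤ ((4^d : ℕ) : ℝ) := by exact_mod_cast hlt.le
      _ = (4:ℝ)^d := by push_cast; ring
  have h1A : (1:ℝ) ≤ (4:ℝ)^d := by
    calc (1:ℝ) = 1^d := by simp
      _ ≤ 4^d := pow_le_pow_left₀ (by norm_num) (by norm_num) d
  have s1 : ((d:ℝ)-1)*(4:ℝ)^d ≤ ((4:ℝ)^d - 1)*(n:ℝ) := by
    have hint : ((n:ℝ) - d) * 1 ≤ ((n:ℝ) - d) * (4:ℝ)^d :=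
      mul_le_mul_of_nonneg_left h1A (by linarith)
    nlinarith [hint, hd4]
  have s2 : ((d:ℝ)-1) * (2*(n:ℝ)*2^(2*d-1)) = (((d:ℝ)-1)*(4:ℝ)^d)*(n:ℝ) := by
    rw [h4]; ring
  have t1 : ((d:ℝ)-1)*(2*(n:ℝ)*2^(2*d-1)) ≤ ((4:ℝ)^d - 1)*(n:ℝ)^2 := by
    have := mul_le_mul_of_nonneg_right s1 (show (0:ℝ) ≤ (n:ℝ) by linarith)
    rw [s2]
    nlinarith [this]
  have hGle : ∀ i, i ≤ n → GR d n i ≤ 4^d * (n:ℝ)^2 := by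
    intro i hi
    by_cases hc : i < d
    · simp only [GR]; rw [if_pos hc]
      have hi0d : (i:ℝ) ≤ (d:ℝ) - 1 := by
        have : (i:ℝ) + 1 ≤ (d:ℝ) := by exact_mod_cast hc
        linarith
      have hKn : (0:ℝ) ≤ 2*(n:ℝ)*2^(2*d-1) := by positivity
      have step1 : (i:ℝ) * (2*(n:ℝ)*2^(2*d-1)) ≤ ((d:ℝ)-1) * (2*(n:ℝ)*2^(2*d-1)) :=
        mul_le_mul_of_nonneg_right hi0d hKn
      nlinarith [step1, t1, sq_nonneg (n:ℝ)]
    · push_neg at hc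
      simp only [GR]; rw [if_neg (by omega : ¬ i < d)]
      have hin : (i:ℝ) ≤ (n:ℝ) := by exact_mod_cast hi
      have hdi0 : (d:ℝ) ≤ (i:ℝ) := by exact_mod_cast hc
      have hsq : ((i:ℝ)-(d:ℝ)+1)*(2*(n:ℝ)+1-(i:ℝ)-(d:ℝ)) ≤ (n:ℝ)^2 := by
        nlinarith [sq_nonneg ((n:ℝ) - (i:ℝ)),
          mul_nonneg (show (0:ℝ) ≤ (d:ℝ)-1 by linarith)
            (show (0:ℝ) ≤ 2*(n:ℝ)-(d:ℝ)+1 by linarith)]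
      nlinarith [t1, hsq]
  intro i0 hi0
  exact (hG i0 hi0).trans (hGle i0 hi0)
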